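/- Let x = (x_1,...,x_n) and y = (y_1,...,y_n) be discrete probability distributions. Define z by z_{ij} = x_i * y_j for i ≠ j and z_0 = 1 - Σ_{i≠j} z_{ij}. Then the Shannon entropy of z satisfies H(z) ≤ ((2n-1)/n) * log n. -/

import Mathlib

open Real Finset

private lemma sum_ite_ne' {n : ℕ} (i : Fin n) (f : Fin n → ℝ) :
    ∑ j, (if i ≠ j then f j else 0) = (∑ j, f j) - f i := by
  have h : ∀ j : Fin n, (if i ≠ j then f j else 0) = f j - (if i = j then f j else 0) := by
    intro j; by_cases h : i = j <;> simp [h]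
  rw [Finset.sum_congr rfl fun j _ => h j, Finset.sum_sub_distrib, Finset.sum_ite_eq]
  simp

private lemma gibbs_pt {t q : ℝ} (ht : 0 ≤ t) (hq : 0 < q) :
    Real.negMulLog t ≤ -(t * Real.log q) + q - t := by
  rcases eq_or_lt_of_le ht with h | h
  · simp [← h]
    linarith
  · have hlog := Real.log_le_sub_one_of_pos (div_pos hq h)
    rw [Real.log_div hq.ne' h.ne'] at hlog
    have h2 := mul_le_mul_of_nonneg_left hlog h.le
    have h3 : t * (q / t - 1) = q - t := by field_simp
    rw [Real.negMulLog]
    nlinarith [h2, h3]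

private lemma zlogz_ge {z : ℝ} (hz : 0 < z) : z - 1 ≤ z * Real.log z := by
  have h := Real.log_le_sub_one_of_pos (inv_pos.mpr hz)
  rw [Real.log_inv] at h
  have h2 := mul_le_mul_of_nonneg_left h hz.le
  have h3 : z * (z⁻¹ - 1) = 1 - z := by field_simp
  nlinarith [h2, h3]

private lemma G1 {z : ℝ} (h0 : 0 < z) (h1 : z ≤ 1) :
    (1 - z)^2/2 ≤ z * Real.log z - z + 1 := by
  set f : ℝ → ℝ := fun t => t * Real.log t - t + 1 - (1-t)^2/2 with hf
  have hderiv : ∀ t ∈ Set.Ioo z 1, HasDerivAt f (Real.log t + 1 - t) t := by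
    intro t ht
    have ht0 : t ≠ 0 := by have := h0.trans ht.1; positivity
    have h2 := (((Real.hasDerivAt_mul_log ht0).sub (hasDerivAt_id' t)).add_const (1:ℝ)).sub
      ((((hasDerivAt_const t (1:ℝ)).sub (hasDerivAt_id' t)).pow 2).div_const 2)
    refine h2.congr_deriv ?_
    push_cast
    simp only [Pi.sub_apply]
    ring
  have key : AntitoneOn f (Set.Icc z 1) := by
    apply antitoneOn_of_deriv_nonpos (convex_Icc z 1)
    · exact (((Real.continuous_mul_log.sub continuous_id).add continuous_const).sub
        (((continuous_const.sub continuous_id).pow 2).div_const 2)).continuousOn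
    · rw [interior_Icc]
      intro t ht
      exact (hderiv t ht).differentiableAt.differentiableWithinAt
    · rw [interior_Icc]
      intro t ht
      rw [(hderiv t ht).deriv]
      have h4 := Real.log_le_sub_one_of_pos (h0.trans ht.1)
      linarith
  have h5 : f 1 ≤ f z := key (Set.mem_Icc.mpr ⟨le_refl z, h1⟩)
    (Set.mem_Icc.mpr ⟨h1, le_refl 1⟩) h1
  have h6 : f 1 = 0 := by simp [hf]
  have h8 : 0 ≤ f z := by rw [← h6]; exact h5
  have h7 : f z = z * Real.log z - z + 1 - (1-z)^2/2 := rfl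
  rw [h7] at h8
  linarith

private lemma G2 {z : ℝ} (h1 : 1 ≤ z) : 2*(z-1) ≤ (z+1) * Real.log z := by
  set f : ℝ → ℝ := fun t => (t+1) * Real.log t - 2*(t-1) with hf
  have hsub : Set.Icc (1:ℝ) z ⊆ {(0:ℝ)}ᶜ := by
    intro w hw
    simp only [Set.mem_compl_iff, Set.mem_singleton_iff]
    intro h
    rw [h] at hw
    exact absurd hw.1 (by norm_num)
  have hderiv : ∀ t ∈ Set.Ioo (1:ℝ) z, HasDerivAt f (Real.log t + (t+1) * t⁻¹ - 2) t := by
    intro t ht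
    have ht0 : (0:ℝ) < t := lt_trans one_pos ht.1
    have h2 : HasDerivAt (fun t : ℝ => (t+1) * Real.log t) (1 * Real.log t + (t+1) * t⁻¹) t :=
      ((hasDerivAt_id' t).add_const 1).mul (Real.hasDerivAt_log ht0.ne')
    have h3 := h2.sub (((hasDerivAt_id' t).sub_const (1:ℝ)).const_mul 2)
    refine h3.congr_deriv ?_
    ring
  have key : MonotoneOn f (Set.Icc 1 z) := by
    apply monotoneOn_of_deriv_nonneg (convex_Icc 1 z)
    · exact (((continuous_id.add continuous_const).continuousOn.mul
        (Real.continuousOn_log.mono hsub)).sub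
        (continuous_const.mul (continuous_id.sub continuous_const)).continuousOn)
    · rw [interior_Icc]
      intro t ht
      exact (hderiv t ht).differentiableAt.differentiableWithinAt
    · rw [interior_Icc]
      intro t ht
      rw [(hderiv t ht).deriv]
      have ht0 : (0:ℝ) < t := lt_trans one_pos ht.1
      have h4 := Real.one_sub_inv_le_log_of_pos ht0
      have h5 : (t+1) * t⁻¹ = 1 + t⁻¹ := by field_simp
      linarith
  have h5 : f 1 ≤ f z := key (Set.mem_Icc.mpr ⟨le_refl 1, h1⟩)
    (Set.mem_Icc.mpr ⟨h1, le_refl z⟩) h1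
  have h6 : f 1 = 0 := by simp [hf]
  have h8 : 0 ≤ f z := by rw [← h6]; exact h5
  have h7 : f z = (z+1) * Real.log z - 2*(z-1) := rfl
  rw [h7] at h8
  linarith

set_option maxHeartbeats 2000000 in
private lemma key2 {N u v : ℝ} (hN : 2 ≤ N) (hu0 : 0 ≤ u) (hu1 : u ≤ 1)
    (hv0 : 0 ≤ v) (hv1 : v ≤ 1) :
    Real.negMulLog u + Real.negMulLog v - Real.negMulLog (u*v) ≤
      (max (Real.log N - 1) 0 + 2 - 2*Real.log N) * (u*v)
      + (Real.log N - 1 - 1/N - max (Real.log N - 1) 0/N) * (u+v)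
      + (2/N + max (Real.log N - 1) 0/N^2) := by
  have hN0 : (0:ℝ) < N := by linarith
  have hN1 : (1:ℝ) ≤ N := by linarith
  have hNm1 : (0:ℝ) < N - 1 := by linarith
  set L := Real.log N with hL
  have hL0 : 0 ≤ L := Real.log_nonneg hN1
  set c := max (L - 1) 0 with hc
  have hc0 : 0 ≤ c := le_max_right _ _
  have hcL : L - 1 ≤ c := le_max_left _ _
  set σ : ℝ → ℝ := fun t => t*(L + Real.log t) - t + 1/N with hσ
  -- sigma in terms of z = N * t
  have hσz : ∀ t : ℝ, 0 < t → σ t = ((N*t) * Real.log (N*t) - (N*t) + 1)/N := by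
    intro t ht
    have : Real.log (N*t) = L + Real.log t := by
      rw [Real.log_mul hN0.ne' ht.ne']
    rw [hσ]
    simp only
    rw [this]
    field_simp
  have hσ0 : ∀ t : ℝ, 0 ≤ t → 0 ≤ σ t := by
    intro t ht
    rcases eq_or_lt_of_le ht with h | h
    · simp [hσ, ← h]
      positivity
    · rw [hσz t h]
      have := zlogz_ge (by positivity : (0:ℝ) < N*t)
      have h2 : (0:ℝ) ≤ (N*t) * Real.log (N*t) - (N*t) + 1 := by linarith
      positivity
  have hσ1 : ∀ t : ℝ, 0 ≤ t → t ≤ 1/N → N*(1/N - t)^2/2 ≤ σ t := by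
    intro t ht0 ht1
    rcases eq_or_lt_of_le ht0 with h | h
    · have hσ0v : σ 0 = 1/N := by simp [hσ]
      rw [← h, hσ0v]
      have hinv : N*(1/N) = 1 := by field_simp
      nlinarith [hinv, hN0]
    · have hz1 : N * t ≤ 1 := by
        rw [← mul_le_mul_iff_right₀ hN0] at ht1
        calc N * t ≤ N * (1/N) := by nlinarith
        _ = 1 := by field_simp
      have hz0 : 0 < N * t := by positivity
      have hg := G1 hz0 hz1
      rw [hσz t h]
      have hexp : N*(1/N - t)^2/2 = ((1 - N*t)^2/2)/N := by
        field_simp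
      rw [hexp]
      gcongr
  have hσ2 : ∀ t : ℝ, 1/N ≤ t → t ≤ 1 → (t - 1/N)^2/2 ≤ σ t := by
    intro t ht0 ht1
    have h : 0 < t := lt_of_lt_of_le (by positivity) ht0
    have hz1 : 1 ≤ N * t := by
      calc (1:ℝ) = N * (1/N) := by field_simp
      _ ≤ N * t := by nlinarith
    have hzN : N * t ≤ N := by nlinarith
    have hg := G2 hz1
    -- z log z - z + 1 ≥ (z-1)^2/(z+1) ≥ (z-1)^2/(2N)
    set z := N * t with hzdef
    have hz0 : (0:ℝ) < z := by positivity
    have h1 : (z-1)^2/(z+1) ≤ z * Real.log z - z + 1 := by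
      rw [div_le_iff₀ (by linarith)]
      nlinarith [hg, zlogz_ge hz0, mul_le_mul_of_nonneg_left hg (by linarith : (0:ℝ) ≤ z - 1)]
    have h2 : (z-1)^2/(2*N) ≤ (z-1)^2/(z+1) := by
      rw [div_le_div_iff₀ (by positivity) (by linarith)]
      nlinarith [sq_nonneg (z-1)]
    have h3 : (t - 1/N)^2/2 = ((z-1)^2/(2*N))/N := by
      rw [hzdef]
      field_simp
    rw [hσz t h, h3, ← hzdef]
    gcongr
    · linarith [h1, h2]
  -- the algebraic identity
  have hid : (c + 2 - 2*L) * (u*v) + (L - 1 - 1/N - c/N) * (u+v) + (2/N + c/N^2)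
      - (Real.negMulLog u + Real.negMulLog v - Real.negMulLog (u*v))
      = (1-v) * σ u + (1-u) * σ v + c*(u - 1/N)*(v - 1/N) := by
    rw [Real.negMulLog_mul]
    simp only [Real.negMulLog, hσ]
    field_simp
    ring
  rw [← sub_nonneg, hid]
  clear_value σ
  -- global fact
  have hF' : N*(c^2 + 2*c) ≤ (N-1)^2 := by
    rcases le_or_gt L 1 with hL1 | hL1
    · have hc00 : c = 0 := by
        rw [hc, max_eq_right]
        linarith
      rw [hc00]
      nlinarith
    · have hcc : c = L - 1 := by
        rw [hc, max_eq_left]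
        linarith
      have hsqrtN : 0 < Real.sqrt N := Real.sqrt_pos.mpr hN0
      have he0 := Real.exp_pos 1
      have h1 : Real.log (Real.sqrt N) ≤ Real.sqrt N / Real.exp 1 := by
        have h2 := Real.log_le_sub_one_of_pos (div_pos hsqrtN he0)
        rw [Real.log_div hsqrtN.ne' he0.ne', Real.log_exp] at h2
        linarith
      have hlogsqrt : Real.log (Real.sqrt N) = L/2 := by
        rw [Real.log_sqrt hN0.le]
      have hLe : L * Real.exp 1 ≤ 2 * Real.sqrt N := by
        rw [hlogsqrt] at h1
        rw [div_le_div_iff₀ (by norm_num) he0] at h1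
        linarith
      have hLe2 : L^2 * (Real.exp 1)^2 ≤ 4 * N := by
        have h3 : (L * Real.exp 1)^2 ≤ (2 * Real.sqrt N)^2 := by
          apply sq_le_sq' ?_ hLe
          nlinarith [hL0, he0, hsqrtN]
        have h4 : (2 * Real.sqrt N)^2 = 4 * N := by
          rw [mul_pow, Real.sq_sqrt hN0.le]
          norm_num
        nlinarith [h3, h4]
      have he : (2.7182818283:ℝ) < Real.exp 1 := Real.exp_one_gt_d9
      have hee : (7:ℝ) ≤ (Real.exp 1)^2 := by nlinarith [he]
      have hNe : Real.exp 1 < N := by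
        have h5 : N = Real.exp L := (Real.exp_log hN0).symm
        rw [h5]
        exact Real.exp_lt_exp.mpr hL1
      have hL2 : L^2 ≤ N - 1 := by
        nlinarith [hLe2, hee, hNe, he, sq_nonneg L]
      rw [hcc]
      nlinarith [hL2, hN0, hNm1]
  clear_value L c
  -- mixed-region core
  have hmix : ∀ a b : ℝ, 0 ≤ a → a ≤ 1 → 0 ≤ b → 1/N ≤ a → b ≤ 1/N →
      0 ≤ (1-b) * σ a + (1-a) * σ b + c*(a - 1/N)*(b - 1/N) := by
    intro a b ha0 ha1 hb0 ha hb
    have hs2 := hσ2 a ha ha1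
    have hs1 := hσ1 b hb0 hb
    have hbb : (N-1)/N ≤ 1 - b := by
      have h9 : (N-1)/N = 1 - 1/N := by field_simp
      linarith [h9]
    have heps : 0 ≤ a - 1/N := by linarith
    have hdel : 0 ≤ 1/N - b := by linarith
    have hsa0 : 0 ≤ σ a := hσ0 a ha0
    have hsb0 : 0 ≤ σ b := hσ0 b hb0
    have hcross : c*(a - 1/N)*(b - 1/N) = -(c * (a-1/N) * (1/N - b)) := by ring
    rw [hcross]
    rcases le_or_gt (c^2) ((1-a)*(N-1)) with hA | hB
    · have t1 : (N-1)/N * ((a-1/N)^2/2) ≤ (1-b) * σ a :=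
        mul_le_mul hbb hs2 (by positivity) (by linarith)
      have t2 : c^2/(N-1) * (N*(1/N-b)^2/2) ≤ (1-a) * σ b := by
        apply mul_le_mul ?_ hs1 (by positivity) (by linarith)
        rw [div_le_iff₀ hNm1]
        linarith [hA]
      have hP : ((N-1)/N * ((a-1/N)^2/2) + c^2/(N-1) * (N*(1/N-b)^2/2)
          - c * (a-1/N) * (1/N - b)) * (2*N*(N-1))
          = ((N-1)*(a-1/N) - c*N*(1/N-b))^2 := by
        field_simp
        ring
      nlinarith [hP, sq_nonneg ((N-1)*(a-1/N) - c*N*(1/N-b)),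
        mul_pos (mul_pos two_pos hN0) hNm1, t1, t2]
    · have hAeq : (N-1)*(a-1/N)*N = (N-1)^2 - N*((1-a)*(N-1)) := by
        field_simp
        ring
      have heB' : 2*c ≤ (N-1)*(a-1/N) := by
        nlinarith [hB, hF', hAeq, hN0, hNm1]
      have t1 : c * (a - 1/N) * (1/N - b) ≤ c * (a-1/N) * (1/N) :=
        mul_le_mul_of_nonneg_left (by linarith) (by positivity)
      have t3 : c * (a-1/N) * (1/N) ≤ (N-1)/N * ((a-1/N)^2/2) := by
        rw [show c * (a-1/N) * (1/N) = (c*(a-1/N))/N by ring,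
          show (N-1)/N * ((a-1/N)^2/2) = ((N-1)*((a-1/N)^2)/2)/N by ring]
        gcongr
        · nlinarith [mul_le_mul_of_nonneg_left heB' heps]
      have t4 : (N-1)/N * ((a-1/N)^2/2) ≤ (1-b) * σ a :=
        mul_le_mul hbb hs2 (by positivity) (by linarith)
      nlinarith [t1, t3, t4, mul_nonneg (by linarith : (0:ℝ) ≤ 1-a) hsb0]
  -- case analysis on positions
  rcases le_total (1/N) u with hu | hu <;> rcases le_total (1/N) v with hv | hv
  · have h1 : 0 ≤ c*(u - 1/N)*(v - 1/N) := by
      apply mul_nonneg (mul_nonneg hc0 (by linarith)) (by linarith)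
    nlinarith [mul_nonneg (by linarith : (0:ℝ) ≤ 1-v) (hσ0 u hu0),
      mul_nonneg (by linarith : (0:ℝ) ≤ 1-u) (hσ0 v hv0), h1]
  · linarith [hmix u v hu0 hu1 hv0 hu hv]
  · linarith [hmix v u hv0 hv1 hu0 hv hu]
  · have h1 : 0 ≤ c*(u - 1/N)*(v - 1/N) := by
      have h2 : (0:ℝ) ≤ (1/N - u)*(1/N - v) := mul_nonneg (by linarith) (by linarith)
      nlinarith [mul_nonneg hc0 h2]
    nlinarith [mul_nonneg (by linarith : (0:ℝ) ≤ 1-v) (hσ0 u hu0),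
      mul_nonneg (by linarith : (0:ℝ) ≤ 1-u) (hσ0 v hv0), h1]


set_option maxHeartbeats 2000000

/-- The entropy of the induced transition distribution `z` (with `z_{ij} = x_i y_j`
for `i ≠ j` and residual entry `z_0 = 1 - ∑_{i≠j} x_i y_j`) is bounded by
`((2n-1)/n) log n` for any probability vectors `x, y` on `n` outcomes. -/
theorem entropy_rate_upper_bound (n : ℕ) (hn : 0 < n) (x y : Fin n → ℝ)
    (hx0 : ∀ i, 0 ≤ x i) (hy0 : ∀ i, 0 ≤ y i)
    (hx1 : ∑ i, x i = 1) (hy1 : ∑ i, y i = 1) :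
    (∑ i, ∑ j, if i ≠ j then Real.negMulLog (x i * y j) else 0)
      + Real.negMulLog (1 - ∑ i, ∑ j, if i ≠ j then x i * y j else 0)
      ≤ (2 * (n : ℝ) - 1) / n * Real.log n := by
  by_cases hn1 : n = 1
  · subst hn1
    have e : ∀ (f : Fin 1 → Fin 1 → ℝ), ∑ i, ∑ j, (if i ≠ j then f i j else 0) = 0 := by
      intro f
      apply Finset.sum_eq_zero
      intro i _
      apply Finset.sum_eq_zero
      intro j _
      have h : i = j := Subsingleton.elim i j
      simp [h]
    rw [e (fun i j => Real.negMulLog (x i * y j)), e (fun i j => x i * y j)]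
    norm_num
  -- n ≥ 2
  have hn2 : 2 ≤ n := by omega
  set N : ℝ := (n:ℝ) with hNdef
  have hN2 : (2:ℝ) ≤ N := by rw [hNdef]; exact_mod_cast hn2
  have hN0 : (0:ℝ) < N := by linarith
  have hN1' : (1:ℝ) ≤ N := by linarith
  have hNm1 : (0:ℝ) < N - 1 := by linarith
  set L := Real.log N with hLdef
  have hL0 : 0 ≤ L := Real.log_nonneg hN1'
  set s := ∑ i, x i * y i with hsdef
  have hxle : ∀ i, x i ≤ 1 := by
    intro i
    calc x i ≤ ∑ j, x j := Finset.single_le_sum (fun j _ => hx0 j) (Finset.mem_univ i)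
    _ = 1 := hx1
  have hyle : ∀ i, y i ≤ 1 := by
    intro i
    calc y i ≤ ∑ j, y j := Finset.single_le_sum (fun j _ => hy0 j) (Finset.mem_univ i)
    _ = 1 := hy1
  have hs0 : 0 ≤ s := Finset.sum_nonneg fun i _ => mul_nonneg (hx0 i) (hy0 i)
  have hs1 : s ≤ 1 := by
    calc s ≤ ∑ i, x i := Finset.sum_le_sum fun i _ => mul_le_of_le_one_right (hx0 i) (hyle i)
    _ = 1 := hx1
  have hprod : ∑ i, ∑ j, x i * y j = 1 := by
    have h1 : ∀ i : Fin n, ∑ j, x i * y j = x i := by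
      intro i
      rw [← Finset.mul_sum, hy1, mul_one]
    rw [Finset.sum_congr rfl fun i _ => h1 i, hx1]
  have hoff : ∑ i, ∑ j, (if i ≠ j then x i * y j else 0) = 1 - s := by
    have h1 : ∀ i : Fin n, ∑ j, (if i ≠ j then x i * y j else 0)
        = (∑ j, x i * y j) - x i * y i := fun i => sum_ite_ne' i _
    rw [Finset.sum_congr rfl fun i _ => h1 i, Finset.sum_sub_distrib, hprod, ← hsdef]
  rw [hoff, show (1:ℝ) - (1 - s) = s by ring]
  have htarget : (2*N - 1)/N * L = 2*L - L/N := by field_simp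
  rw [show (2 * (n:ℝ) - 1) / n * Real.log n = (2*N - 1)/N * L by rw [← hNdef, ← hLdef], htarget]
  clear_value N L s
  rcases le_total s (1/N) with hsm | hsb
  · -- CASE s ≤ 1/N
    obtain ⟨C, hC⟩ : ∃ C:ℝ, max (L-1) 0 = C := ⟨_, rfl⟩
    have hCge : L - 1 ≤ C := by rw [← hC]; exact le_max_left _ _
    have hC0 : 0 ≤ C := by rw [← hC]; exact le_max_right _ _
    obtain ⟨A, hA⟩ : ∃ A:ℝ, L - 1 - 1/N - C/N = A := ⟨_, rfl⟩
    obtain ⟨B, hB⟩ : ∃ B:ℝ, 2/N + C/N^2 = B := ⟨_, rfl⟩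
    have hnm : ∑ i, ∑ j, (if i ≠ j then Real.negMulLog (x i * y j) else 0)
        = (∑ i, Real.negMulLog (x i)) + (∑ i, Real.negMulLog (y i))
          - ∑ i, Real.negMulLog (x i * y i) := by
      have e1 : ∀ i : Fin n, ∑ j, (if i ≠ j then Real.negMulLog (x i * y j) else 0)
          = (∑ j, Real.negMulLog (x i * y j)) - Real.negMulLog (x i * y i) :=
        fun i => sum_ite_ne' i _
      have e2 : ∀ i : Fin n, ∑ j, Real.negMulLog (x i * y j)
          = Real.negMulLog (x i) + x i * ∑ j, Real.negMulLog (y j) := by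
        intro i
        have e3 : ∀ j : Fin n, Real.negMulLog (x i * y j)
            = y j * Real.negMulLog (x i) + x i * Real.negMulLog (y j) :=
          fun j => Real.negMulLog_mul _ _
        rw [Finset.sum_congr rfl fun j _ => e3 j, Finset.sum_add_distrib,
          ← Finset.sum_mul, ← Finset.mul_sum, hy1, one_mul]
      rw [Finset.sum_congr rfl fun i _ => e1 i, Finset.sum_sub_distrib,
        Finset.sum_congr rfl fun i _ => e2 i, Finset.sum_add_distrib,
        ← Finset.sum_mul, hx1, one_mul]
    have hkey : ∀ i : Fin n, Real.negMulLog (x i) + Real.negMulLog (y i)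
        - Real.negMulLog (x i * y i)
        ≤ (C + 2 - 2*L) * (x i * y i) + A * (x i + y i) + B := by
      intro i
      have h00 := key2 (N := N) (u := x i) (v := y i) hN2 (hx0 i) (hxle i) (hy0 i) (hyle i)
      rw [← hLdef] at h00
      rw [hC] at h00
      rw [hA, hB] at h00
      exact h00
    have hsum1 : (∑ i, Real.negMulLog (x i)) + (∑ i, Real.negMulLog (y i))
        - (∑ i, Real.negMulLog (x i * y i))
        ≤ (C + 2 - 2*L) * s + A * 2 + N * B := by
      have h1 : ∑ i, (Real.negMulLog (x i) + Real.negMulLog (y i)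
          - Real.negMulLog (x i * y i))
          ≤ ∑ i, ((C + 2 - 2*L) * (x i * y i) + A * (x i + y i) + B) :=
        Finset.sum_le_sum fun i _ => hkey i
      have h2 : ∑ i, (Real.negMulLog (x i) + Real.negMulLog (y i)
          - Real.negMulLog (x i * y i))
          = (∑ i, Real.negMulLog (x i)) + (∑ i, Real.negMulLog (y i))
            - ∑ i, Real.negMulLog (x i * y i) := by
        rw [Finset.sum_sub_distrib, Finset.sum_add_distrib]
      have h3 : ∑ i, ((C + 2 - 2*L) * (x i * y i) + A * (x i + y i) + B)
          = (C + 2 - 2*L) * s + A * 2 + N * B := by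
        rw [Finset.sum_add_distrib, Finset.sum_add_distrib, ← Finset.mul_sum, ← hsdef,
          ← Finset.mul_sum, Finset.sum_add_distrib, hx1, hy1, Finset.sum_const,
          Finset.card_univ, Fintype.card_fin, nsmul_eq_mul, ← hNdef]
        norm_num
      rw [← h2, ← h3]
      exact h1
    have hstep : (C + 2 - 2*L) * s + Real.negMulLog s ≤ ((C + 2 - 2*L) + L)/N := by
      rcases eq_or_lt_of_le hs0 with h | h
      · rw [← h, Real.negMulLog_zero]
        have h15 : (0:ℝ) ≤ ((C + 2 - 2*L) + L)/N := div_nonneg (by linarith) hN0.le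
        linarith [h15]
      · have hNs : (0:ℝ) < N * s := by positivity
        have h5 := Real.log_le_sub_one_of_pos (inv_pos.mpr hNs)
        rw [Real.log_inv, Real.log_mul hN0.ne' h.ne'] at h5
        -- h5 : -(L + log s) ≤ (N*s)⁻¹ - 1
        have h6 := mul_le_mul_of_nonneg_left h5 hs0
        have h7 : s * (N*s)⁻¹ = 1/N := by
          field_simp
        have h8 : Real.negMulLog s = s * (-(L + Real.log s)) + s * L := by
          rw [Real.negMulLog]
          ring
        have h9 : s * (-(L + Real.log s)) ≤ 1/N - s := by nlinarith [h6, h7]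
        have h10 : 0 ≤ C + 1 - L := by linarith
        have h11 : s * (C + 1 - L) ≤ (1/N) * (C + 1 - L) :=
          mul_le_mul_of_nonneg_right hsm h10
        rw [h8]
        have h12 : ((C + 2 - 2*L) + L)/N = (1/N) * (C + 1 - L) + 1/N := by
          field_simp
          ring
        rw [h12]
        nlinarith [h9, h11]
    have hfinal : (C + 2 - 2*L)*s + A*2 + N*B + Real.negMulLog s ≤ 2*L - L/N := by
      have h13 : A*2 + N*B + ((C + 2 - 2*L) + L)/N = 2*L - L/N := by
        rw [← hA, ← hB]
        field_simp
        ring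
      linarith [hstep, h13]
    rw [hnm]
    linarith [hsum1, hfinal]
  · -- CASE s ≥ 1/N
    by_cases hseq : s = 1
    · have h0 : ∑ i, ∑ j, (if i ≠ j then x i * y j else 0) = 0 := by
        rw [hoff, hseq]
        ring
      have hz : ∀ i j : Fin n, i ≠ j → x i * y j = 0 := by
        intro i j hij
        have hnn : ∀ i ∈ (univ : Finset (Fin n)),
            (0:ℝ) ≤ ∑ j, (if i ≠ j then x i * y j else 0) := by
          intro i _
          apply Finset.sum_nonneg
          intro j _
          by_cases h : i ≠ j
          · rw [if_pos h]; exact mul_nonneg (hx0 i) (hy0 j)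
          · rw [if_neg h]
        have h1 := (Finset.sum_eq_zero_iff_of_nonneg hnn).mp h0 i (Finset.mem_univ i)
        have hnn2 : ∀ j ∈ (univ : Finset (Fin n)),
            (0:ℝ) ≤ (if i ≠ j then x i * y j else 0) := by
          intro j _
          by_cases h : i ≠ j
          · rw [if_pos h]; exact mul_nonneg (hx0 i) (hy0 j)
          · rw [if_neg h]
        have h2 := (Finset.sum_eq_zero_iff_of_nonneg hnn2).mp h1 j (Finset.mem_univ j)
        rwa [if_pos hij] at h2
      have hsum0 : ∑ i, ∑ j, (if i ≠ j then Real.negMulLog (x i * y j) else 0) = 0 :=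
        Finset.sum_eq_zero fun i _ => Finset.sum_eq_zero fun j _ => by
          by_cases h : i ≠ j
          · rw [if_pos h, hz i j h, Real.negMulLog_zero]
          · rw [if_neg h]
      rw [hsum0, hseq]
      simp
      have h30 : L/N ≤ L := div_le_self hL0 hN1'
      linarith [hL0, h30]
    · have hslt : s < 1 := lt_of_le_of_ne hs1 hseq
      obtain ⟨q, hq⟩ : ∃ q:ℝ, (1-s)/(N*(N-1)) = q := ⟨_, rfl⟩
      have hq0 : 0 < q := hq ▸ div_pos (by linarith) (mul_pos hN0 hNm1)
      have hb1 : ∑ i, ∑ j, (if i ≠ j then Real.negMulLog (x i * y j) else 0)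
          ≤ ∑ i, ∑ j, (if i ≠ j then (-(x i * y j * Real.log q) + q - x i * y j) else 0) := by
        apply Finset.sum_le_sum
        intro i _
        apply Finset.sum_le_sum
        intro j _
        by_cases h : i ≠ j
        · rw [if_pos h, if_pos h]
          have h1 := gibbs_pt (mul_nonneg (hx0 i) (hy0 j)) hq0
          linarith [h1]
        · rw [if_neg h, if_neg h]
      have hcnt : ∑ i : Fin n, ∑ j : Fin n, (if i ≠ j then q else 0) = N*(N-1)*q := by
        have e1 : ∀ i : Fin n, ∑ j, (if i ≠ j then q else 0)
            = (∑ _j : Fin n, q) - q := fun i => sum_ite_ne' i _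
        rw [Finset.sum_congr rfl fun i _ => e1 i]
        simp only [Finset.sum_const, Finset.card_univ, Fintype.card_fin, nsmul_eq_mul, hNdef]
        ring
      have hRHS : ∑ i, ∑ j, (if i ≠ j then (-(x i * y j * Real.log q) + q - x i * y j) else 0)
          = -((1-s) * Real.log q) + N*(N-1)*q - (1-s) := by
        have hsplit : ∀ i j : Fin n,
            (if i ≠ j then (-(x i * y j * Real.log q) + q - x i * y j) else 0)
            = -((if i ≠ j then x i * y j else 0) * Real.log q) + (if i ≠ j then q else 0)
              - (if i ≠ j then x i * y j else 0) := by
          intro i j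
          by_cases h : i ≠ j <;> simp [h]
        have inner : ∀ i : Fin n, ∑ j, (-((if i ≠ j then x i * y j else 0) * Real.log q)
            + (if i ≠ j then q else 0) - (if i ≠ j then x i * y j else 0))
            = -((∑ j, (if i ≠ j then x i * y j else 0)) * Real.log q)
              + (∑ j, (if i ≠ j then q else 0)) - (∑ j, (if i ≠ j then x i * y j else 0)) := by
          intro i
          rw [Finset.sum_sub_distrib, Finset.sum_add_distrib, Finset.sum_neg_distrib,
            ← Finset.sum_mul]
        rw [Finset.sum_congr rfl fun i _ => Finset.sum_congr rfl fun j _ => hsplit i j,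
          Finset.sum_congr rfl fun i _ => inner i,
          Finset.sum_sub_distrib, Finset.sum_add_distrib, Finset.sum_neg_distrib,
          ← Finset.sum_mul, hoff, hcnt]
      have hqval : N*(N-1)*q = 1 - s := by
        rw [← hq, mul_comm, div_mul_cancel₀ _ (mul_pos hN0 hNm1).ne']
      have hlogq : Real.log q = Real.log (1-s) - (L + Real.log (N-1)) := by
        rw [← hq, Real.log_div (ne_of_gt (by linarith : (0:ℝ) < 1-s))
          (mul_pos hN0 hNm1).ne', Real.log_mul hN0.ne' hNm1.ne', hLdef]
      have hsp : (0:ℝ) < s := lt_of_lt_of_le (div_pos one_pos hN0) hsb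
      have ha : Real.negMulLog s ≤ s*L + 1/N - s := by
        have hNs : (0:ℝ) < N * s := mul_pos hN0 hsp
        have h5 := Real.log_le_sub_one_of_pos (inv_pos.mpr hNs)
        rw [Real.log_inv, Real.log_mul hN0.ne' hsp.ne'] at h5
        have h6 := mul_le_mul_of_nonneg_left h5 hs0
        have h7 : s * (N*s)⁻¹ = 1/N := by
          field_simp
        rw [Real.negMulLog]
        nlinarith [h6, h7]
      have hbnd : -((1-s) * Real.log q) ≤ 2*L*(1-s) + s - 1/N := by
        have hr0 : (0:ℝ) < ((N-1)/N)/(1-s) := by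
          apply div_pos (div_pos hNm1 hN0) (by linarith)
        have h5 := Real.log_le_sub_one_of_pos hr0
        have h6 : Real.log (((N-1)/N)/(1-s)) = Real.log (N-1) - L - Real.log (1-s) := by
          rw [Real.log_div (div_pos hNm1 hN0).ne'
            (ne_of_gt (by linarith : (0:ℝ) < 1-s)), Real.log_div hNm1.ne' hN0.ne', hLdef]
        rw [h6] at h5
        have h10 := mul_le_mul_of_nonneg_left h5 (by linarith : (0:ℝ) ≤ 1-s)
        have hne : (1:ℝ)-s ≠ 0 := ne_of_gt (by linarith)
        have h11 : (1-s)*((((N-1)/N)/(1-s)) - 1) = (N-1)/N - (1-s) := by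
          field_simp [hne]
        have h9 : (N-1)/N = 1 - 1/N := by field_simp
        rw [hlogq]
        nlinarith [h10, h11, h9]
      have hchain : -((1-s) * Real.log q) + Real.negMulLog s ≤ 2*L - L/N := by
        have h20 : (1/N) * L ≤ s * L := mul_le_mul_of_nonneg_right hsb hL0
        have h21 : L/N = (1/N)*L := by ring
        nlinarith [ha, hbnd, h20, h21]
      calc (∑ i, ∑ j, if i ≠ j then Real.negMulLog (x i * y j) else 0) + Real.negMulLog s
          ≤ (-((1-s) * Real.log q) + N*(N-1)*q - (1-s)) + Real.negMulLog s := by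
            rw [← hRHS]
            linarith [hb1]
      _ = -((1-s) * Real.log q) + Real.negMulLog s := by rw [hqval]; ring
      _ ≤ 2*L - L/N := hchain
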